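/- arXiv:1201.4057 — 2 statements merged into one kernel-verified Lean document; each statement's English description precedes it below -/
import Mathlib

section
/- Let u : ℝ → ℝ be twice differentiable on [0, ∞), bounded on [0, ∞), with u''(x) = 2x·u(x) for all x ≥ 0. Then y ↦ u(y)² is integrable on [0, ∞) and ∫_0^∞ u(y)² dy = u'(0)²/2. -/
open MeasureTheory Filter

open Topology Set

lemma st16_mono {a : ℝ} {f f' : ℝ → ℝ}
    (hf : ∀ x ∈ Set.Ici a, HasDerivWithinAt f (f' x) (Set.Ici a) x)
    (h0 : ∀ x ∈ Set.Ici a, 0 ≤ f' x) : MonotoneOn f (Set.Ici a) := by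
  apply monotoneOn_of_deriv_nonneg (convex_Ici a)
    (fun x hx => (hf x hx).continuousWithinAt)
  · intro x hx
    rw [interior_Ici] at hx
    exact ((hf x (Set.mem_Ici.2 hx.le)).hasDerivAt (Ici_mem_nhds hx)).differentiableAt.differentiableWithinAt
  · intro x hx
    rw [interior_Ici] at hx
    rw [((hf x (Set.mem_Ici.2 hx.le)).hasDerivAt (Ici_mem_nhds hx)).deriv]
    exact h0 x (Set.mem_Ici.2 hx.le)

lemma st16_anti {a : ℝ} {f f' : ℝ → ℝ}
    (hf : ∀ x ∈ Set.Ici a, HasDerivWithinAt f (f' x) (Set.Ici a) x)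
    (h0 : ∀ x ∈ Set.Ici a, f' x ≤ 0) : AntitoneOn f (Set.Ici a) := by
  have := st16_mono (f := fun y => -f y) (f' := fun y => -f' y)
    (fun x hx => (hf x hx).neg) (fun x hx => neg_nonneg.2 (h0 x hx))
  intro x hx y hy hxy
  have h2 : -f x ≤ -f y := this hx hy hxy
  linarith

lemma st16_ii {f : ℝ → ℝ} (hf : ContinuousOn f (Set.Ici 0)) {a b : ℝ}
    (ha : 0 ≤ a) (hab : a ≤ b) : IntervalIntegrable f volume a b := by
  apply ContinuousOn.intervalIntegrable
  rw [Set.uIcc_of_le hab]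
  exact hf.mono (fun x hx => le_trans ha hx.1)

lemma st16_ftc {f f' : ℝ → ℝ}
    (hf : ∀ x ∈ Set.Ici (0:ℝ), HasDerivWithinAt f (f' x) (Set.Ici 0) x)
    (hc' : ContinuousOn f' (Set.Ici 0)) {b : ℝ} (hb : 0 ≤ b) :
    ∫ y in (0:ℝ)..b, f' y = f b - f 0 := by
  apply intervalIntegral.integral_eq_sub_of_hasDeriv_right_of_le hb
  · exact fun x hx => ((hf x hx.1).continuousWithinAt).mono (fun y hy => hy.1)
  · intro x hx
    exact (hf x hx.1.le).mono (fun y hy => le_trans hx.1.le hy.le)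
  · exact st16_ii hc' le_rfl hb

/-- for a bounded solution of `u'' = 2xu` on `[0,∞)`,
`y ↦ u(y)²` is integrable on `[0,∞)` and `∫_0^∞ u(y)² dy = u'(0)²/2`. -/
theorem statement16 (u u' : ℝ → ℝ)
    (hd : ∀ x ∈ Set.Ici (0 : ℝ), HasDerivWithinAt u (u' x) (Set.Ici 0) x)
    (hd' : ∀ x ∈ Set.Ici (0 : ℝ), HasDerivWithinAt u' (2 * x * u x) (Set.Ici 0) x)
    (hb : ∃ C : ℝ, ∀ x ∈ Set.Ici (0 : ℝ), |u x| ≤ C) :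
    MeasureTheory.IntegrableOn (fun y => u y ^ 2) (Set.Ici 0) MeasureTheory.volume ∧
      ∫ y in Set.Ici (0 : ℝ), u y ^ 2 = u' 0 ^ 2 / 2 := by
  obtain ⟨C, hC⟩ := hb
  have hC0 : 0 ≤ C := le_trans (abs_nonneg _) (hC 0 Set.self_mem_Ici)
  have husq : ∀ x ∈ Set.Ici (0:ℝ), u x ^ 2 ≤ C ^ 2 := by
    intro x hx
    have := hC x hx
    nlinarith [abs_nonneg (u x), neg_abs_le (u x), le_abs_self (u x)]
  have hcu : ContinuousOn u (Set.Ici 0) := fun x hx => (hd x hx).continuousWithinAt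
  have hcu' : ContinuousOn u' (Set.Ici 0) := fun x hx => (hd' x hx).continuousWithinAt
  -- derivative of g = u * u'
  have hdg : ∀ x ∈ Set.Ici (0:ℝ), HasDerivWithinAt (fun y => u y * u' y)
      (u' x * u' x + u x * (2 * x * u x)) (Set.Ici 0) x :=
    fun x hx => (hd x hx).mul (hd' x hx)
  have hcg' : ContinuousOn (fun x => u' x * u' x + u x * (2 * x * u x)) (Set.Ici 0) :=
    (hcu'.mul hcu').add (hcu.mul (((continuous_const.mul continuous_id).continuousOn).mul hcu))
  have hg'0 : ∀ x ∈ Set.Ici (0:ℝ), 0 ≤ u' x * u' x + u x * (2 * x * u x) := by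
    intro x hx
    have hx0 : (0:ℝ) ≤ x := hx
    nlinarith [mul_self_nonneg (u x), mul_self_nonneg (u' x)]
  have hgmono : MonotoneOn (fun y => u y * u' y) (Set.Ici 0) := st16_mono hdg hg'0
  -- g ≤ 0 on Ici 0
  have hgle : ∀ x ∈ Set.Ici (0:ℝ), u x * u' x ≤ 0 := by
    intro x₀ hx₀
    by_contra hpos
    push_neg at hpos
    set c := u x₀ * u' x₀ with hc
    -- u y ^ 2 - 2 c y is monotone on Ici x₀
    have hmono2 : MonotoneOn (fun y => u y ^ 2 - 2 * c * y) (Set.Ici x₀) := by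
      apply st16_mono (f' := fun y => 2 * u y * u' y - 2 * c)
      · intro x hx
        have hx0 : x ∈ Set.Ici (0:ℝ) := Set.mem_Ici.2 (le_trans hx₀ hx)
        have h1 : HasDerivWithinAt (fun y => u y ^ 2) (2 * u x ^ 1 * u' x) (Set.Ici x₀) x := by
          have := ((hd x hx0).fun_pow 2).mono (fun y (hy : y ∈ Set.Ici x₀) => Set.mem_Ici.2 (le_trans hx₀ hy))
          simpa using this
        have h2 : HasDerivWithinAt (fun y => 2 * c * y) (2 * c) (Set.Ici x₀) x := by
          simpa using (hasDerivWithinAt_id x (Set.Ici x₀)).const_mul (2*c)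
        have := h1.fun_sub h2
        refine this.congr_deriv ?_
        ring
      · intro x hx
        have hx0 : x ∈ Set.Ici (0:ℝ) := Set.mem_Ici.2 (le_trans hx₀ hx)
        have := hgmono hx₀ hx0 hx
        simp only at this
        nlinarith
    set X := x₀ + (C ^ 2 + 1) / (2 * c) with hX
    have hXge : x₀ ≤ X := by
      have h5 : 0 < (C ^ 2 + 1) / (2 * c) := by positivity
      rw [hX]; linarith
    have := hmono2 (le_refl x₀ : x₀ ∈ Set.Ici x₀) (hXge : X ∈ Set.Ici x₀) hXge
    simp only at this
    have hXval : 2 * c * X = 2 * c * x₀ + (C ^ 2 + 1) := by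
      rw [hX]
      field_simp
    have hX0 : X ∈ Set.Ici (0:ℝ) := le_trans hx₀ hXge
    have := husq X hX0
    nlinarith [sq_nonneg (u x₀)]
  -- derivative of u^2
  have hdusq : ∀ x ∈ Set.Ici (0:ℝ), HasDerivWithinAt (fun y => u y ^ 2)
      (2 * (u x * u' x)) (Set.Ici 0) x := by
    intro x hx
    have := (hd x hx).fun_pow 2
    refine this.congr_deriv ?_
    push_cast
    ring
  have husq_anti : AntitoneOn (fun y => u y ^ 2) (Set.Ici 0) :=
    st16_anti hdusq (fun x hx => by nlinarith [hgle x hx])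
  -- derivative of u'^2
  have hdu'sq : ∀ x ∈ Set.Ici (0:ℝ), HasDerivWithinAt (fun y => u' y ^ 2)
      (4 * x * (u x * u' x)) (Set.Ici 0) x := by
    intro x hx
    have := (hd' x hx).fun_pow 2
    refine this.congr_deriv ?_
    push_cast
    ring
  have hu'sq_anti : AntitoneOn (fun y => u' y ^ 2) (Set.Ici 0) := by
    apply st16_anti hdu'sq
    intro x hx
    have h1 := hgle x hx
    have hx0 : (0:ℝ) ≤ x := hx
    nlinarith
  -- FTC for g : bound on ∫ 2 t u t ^ 2
  have hgftc : ∀ M : ℝ, 0 ≤ M →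
      ∫ t in (0:ℝ)..M, (u' t * u' t + u t * (2 * t * u t)) ≤ -(u 0 * u' 0) := by
    intro M hM
    rw [st16_ftc hdg hcg' hM]
    have := hgle M hM
    linarith
  -- integrability of u^2 on Ici 0
  have hcusq : ContinuousOn (fun y => u y ^ 2) (Set.Ici 0) := hcu.pow 2
  have hIoi : MeasureTheory.IntegrableOn (fun y => u y ^ 2) (Set.Ioi 0) volume := by
    apply MeasureTheory.integrableOn_Ioi_of_intervalIntegral_norm_bounded
      (C ^ 2 + -(u 0 * u' 0)) 0 (b := fun i : ℝ => i) (l := atTop) ?_ tendsto_id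
    · filter_upwards [eventually_ge_atTop (1:ℝ)] with M hM
      have hM0 : (0:ℝ) ≤ M := le_trans zero_le_one hM
      have hnorm : ∫ x in (0:ℝ)..M, ‖u x ^ 2‖ = ∫ x in (0:ℝ)..M, u x ^ 2 := by
        apply intervalIntegral.integral_congr
        intro x _
        exact Real.norm_of_nonneg (sq_nonneg _)
      rw [hnorm]
      have hsplit : ∫ x in (0:ℝ)..M, u x ^ 2
          = (∫ x in (0:ℝ)..1, u x ^ 2) + ∫ x in (1:ℝ)..M, u x ^ 2 := by
        rw [intervalIntegral.integral_add_adjacent_intervals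
          (st16_ii hcusq le_rfl zero_le_one) (st16_ii hcusq zero_le_one hM)]
      rw [hsplit]
      have h1 : (∫ x in (0:ℝ)..1, u x ^ 2) ≤ ∫ x in (0:ℝ)..1, C ^ 2 := by
        apply intervalIntegral.integral_mono_on zero_le_one
          (st16_ii hcusq le_rfl zero_le_one) intervalIntegrable_const
        intro x hx
        exact husq x hx.1
      have h1' : (∫ x in (0:ℝ)..1, C ^ 2) = C ^ 2 := by simp
      have h2 : (∫ x in (1:ℝ)..M, u x ^ 2)
          ≤ ∫ x in (1:ℝ)..M, (u' x * u' x + u x * (2 * x * u x)) := by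
        apply intervalIntegral.integral_mono_on hM
          (st16_ii hcusq zero_le_one hM) (st16_ii hcg' zero_le_one hM)
        intro x hx
        have hx1 : (1:ℝ) ≤ x := hx.1
        nlinarith [mul_self_nonneg (u' x), mul_self_nonneg (u x)]
      have h3 : (∫ x in (1:ℝ)..M, (u' x * u' x + u x * (2 * x * u x)))
          ≤ ∫ x in (0:ℝ)..M, (u' x * u' x + u x * (2 * x * u x)) := by
        rw [← intervalIntegral.integral_add_adjacent_intervals
          (st16_ii hcg' le_rfl zero_le_one) (st16_ii hcg' zero_le_one hM)]
        have h4 : 0 ≤ ∫ x in (0:ℝ)..1, (u' x * u' x + u x * (2 * x * u x)) := by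
          apply intervalIntegral.integral_nonneg zero_le_one
          intro x hx
          exact hg'0 x hx.1
        linarith
      have h5 := hgftc M hM0
      linarith
    · intro i
      rcases le_or_gt i 0 with hi | hi
      · rw [Set.Ioc_eq_empty (not_lt.2 hi)]
        · exact MeasureTheory.integrableOn_empty
      · exact ((hcusq.mono (fun x (hx : x ∈ Set.Icc 0 i) => hx.1)).integrableOn_Icc).mono_set
          Set.Ioc_subset_Icc_self
  have hIci : MeasureTheory.IntegrableOn (fun y => u y ^ 2) (Set.Ici 0) volume := by
    rwa [integrableOn_Ici_iff_integrableOn_Ioi]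
  set I := ∫ y in Set.Ioi (0:ℝ), u y ^ 2 with hIdef
  have hφ : Tendsto (fun M : ℝ => ∫ x in (0:ℝ)..M, u x ^ 2) atTop (𝓝 I) :=
    MeasureTheory.intervalIntegral_tendsto_integral_Ioi 0 hIoi tendsto_id
  -- M * u M ^ 2 → 0
  have hMu : Tendsto (fun M : ℝ => M * u M ^ 2) atTop (𝓝 0) := by
    have hφhalf : Tendsto (fun M : ℝ => ∫ x in (0:ℝ)..(M/2), u x ^ 2) atTop (𝓝 I) :=
      hφ.comp (tendsto_id.atTop_div_const two_pos)
    have hdiff : Tendsto (fun M : ℝ =>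
        2 * ((∫ x in (0:ℝ)..M, u x ^ 2) - ∫ x in (0:ℝ)..(M/2), u x ^ 2)) atTop (𝓝 0) := by
      have := (hφ.sub hφhalf).const_mul 2
      simpa using this
    apply squeeze_zero' ?_ ?_ hdiff
    · filter_upwards [eventually_ge_atTop (0:ℝ)] with M hM
      positivity
    · filter_upwards [eventually_ge_atTop (0:ℝ)] with M hM
      have hhalf : (0:ℝ) ≤ M/2 := by linarith
      have hhM : M/2 ≤ M := by linarith
      have hsplit : (∫ x in (0:ℝ)..M, u x ^ 2)
          = (∫ x in (0:ℝ)..(M/2), u x ^ 2) + ∫ x in (M/2)..M, u x ^ 2 := by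
        rw [intervalIntegral.integral_add_adjacent_intervals
          (st16_ii hcusq le_rfl hhalf) (st16_ii hcusq hhalf hhM)]
      have hlow : (M - M/2) * u M ^ 2 ≤ ∫ x in (M/2)..M, u x ^ 2 := by
        have h0 : (∫ _x in (M/2)..M, u M ^ 2) ≤ ∫ x in (M/2)..M, u x ^ 2 := by
          apply intervalIntegral.integral_mono_on hhM intervalIntegrable_const
            (st16_ii hcusq hhalf hhM)
          intro x hx
          exact husq_anti (le_trans hhalf hx.1) hM hx.2
        rw [intervalIntegral.integral_const] at h0
        simpa [smul_eq_mul] using h0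
      have h9 : (M - M/2) * u M ^ 2 = M * u M ^ 2 / 2 := by ring
      linarith
  -- u' M ^ 2 → 0
  have hkey : ∀ ε : ℝ, 0 < ε → ∃ x₀, 0 ≤ x₀ ∧ u' x₀ ^ 2 < ε := by
    intro ε hε
    by_contra hcon
    push_neg at hcon
    have hne : ∀ x : ℝ, 0 ≤ x → u' x ≠ 0 := by
      intro x hx h0
      have := hcon x hx
      rw [h0] at this
      nlinarith
    have hsq : 0 < Real.sqrt ε := Real.sqrt_pos.2 hε
    have hsqsq : Real.sqrt ε ^ 2 = ε := Real.sq_sqrt hε.le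
    rcases lt_or_gt_of_ne (hne 0 le_rfl) with hneg | hpos
    · -- u' 0 < 0 : then u' x < 0 for all x ≥ 0
      have hall : ∀ x, 0 ≤ x → u' x < 0 := by
        intro b hb
        rcases lt_or_gt_of_ne (hne b hb) with h | h
        · exact h
        · exfalso
          have hcont : ContinuousOn u' (Set.Icc 0 b) := hcu'.mono (fun x hx => hx.1)
          have hmem : (0:ℝ) ∈ Set.Icc (u' 0) (u' b) := ⟨hneg.le, h.le⟩
          obtain ⟨c, hc, hc0⟩ := intermediate_value_Icc hb hcont hmem
          exact hne c hc.1 hc0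
      have hle : ∀ x, 0 ≤ x → u' x ≤ -Real.sqrt ε := by
        intro x hx
        have h1 := hcon x hx
        have h2 := hall x hx
        nlinarith
      have hanti : AntitoneOn (fun y => u y + Real.sqrt ε * y) (Set.Ici 0) := by
        apply st16_anti (f' := fun y => u' y + Real.sqrt ε)
        · intro x hx
          exact (hd x hx).add (by simpa using (hasDerivWithinAt_id x (Set.Ici 0)).const_mul (Real.sqrt ε))
        · intro x hx
          linarith [hle x hx]
      set X := (2*C+1)/Real.sqrt ε with hXd
      have hX0 : (0:ℝ) ≤ X := by positivity
      have h5 := hanti Set.self_mem_Ici (hX0 : X ∈ Set.Ici 0) hX0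
      simp only at h5
      have hXval : Real.sqrt ε * X = 2*C+1 := by
        rw [hXd]
        field_simp
      have h6 := hC X hX0
      have h7 := hC 0 Set.self_mem_Ici
      have h8 := neg_abs_le (u X)
      have h9 := le_abs_self (u 0)
      linarith
    · -- u' 0 > 0 : then u' x > 0 for all x ≥ 0
      have hall : ∀ x, 0 ≤ x → 0 < u' x := by
        intro b hb
        rcases lt_or_gt_of_ne (hne b hb) with h | h
        · exfalso
          have hcont : ContinuousOn u' (Set.Icc 0 b) := hcu'.mono (fun x hx => hx.1)
          have hmem : (0:ℝ) ∈ Set.Icc (u' b) (u' 0) := ⟨h.le, hpos.le⟩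
          obtain ⟨c, hc, hc0⟩ := intermediate_value_Icc' hb hcont hmem
          exact hne c hc.1 hc0
        · exact h
      have hle : ∀ x, 0 ≤ x → Real.sqrt ε ≤ u' x := by
        intro x hx
        have h1 := hcon x hx
        have h2 := hall x hx
        nlinarith
      have hmono3 : MonotoneOn (fun y => u y - Real.sqrt ε * y) (Set.Ici 0) := by
        apply st16_mono (f' := fun y => u' y - Real.sqrt ε)
        · intro x hx
          exact (hd x hx).sub (by simpa using (hasDerivWithinAt_id x (Set.Ici 0)).const_mul (Real.sqrt ε))
        · intro x hx
          linarith [hle x hx]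
      set X := (2*C+1)/Real.sqrt ε with hXd
      have hX0 : (0:ℝ) ≤ X := by positivity
      have h5 := hmono3 Set.self_mem_Ici (hX0 : X ∈ Set.Ici 0) hX0
      simp only at h5
      have hXval : Real.sqrt ε * X = 2*C+1 := by
        rw [hXd]
        field_simp
      have h6 := hC X hX0
      have h7 := hC 0 Set.self_mem_Ici
      have h8 := le_abs_self (u X)
      have h9 := neg_abs_le (u 0)
      linarith
  have hu'0 : Tendsto (fun M : ℝ => u' M ^ 2) atTop (𝓝 0) := by
    refine tendsto_order.2 ⟨fun a ha => ?_, fun a ha => ?_⟩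
    · filter_upwards [eventually_ge_atTop (0:ℝ)] with M hM
      exact lt_of_lt_of_le ha (sq_nonneg _)
    · obtain ⟨x₀, hx₀, hlt⟩ := hkey a ha
      filter_upwards [eventually_ge_atTop x₀] with M hM
      exact lt_of_le_of_lt (hu'sq_anti hx₀ (hx₀.trans hM) hM) hlt
  -- FTC for F = u'^2 - 2 x u^2
  have hdF : ∀ x ∈ Set.Ici (0:ℝ), HasDerivWithinAt (fun y => u' y ^ 2 - 2 * y * u y ^ 2)
      (-(2 * u x ^ 2)) (Set.Ici 0) x := by
    intro x hx
    have h1 := hdu'sq x hx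
    have h2 : HasDerivWithinAt (fun y : ℝ => 2 * y) 2 (Set.Ici 0) x := by
      simpa using (hasDerivWithinAt_id x (Set.Ici 0)).const_mul (2:ℝ)
    have h3 := h2.fun_mul (hdusq x hx)
    have h4 := h1.fun_sub h3
    refine h4.congr_deriv ?_
    ring
  have hcF' : ContinuousOn (fun x => -(2 * u x ^ 2)) (Set.Ici 0) :=
    ((hcusq.const_smul (2:ℝ)).neg : )
  have hFTC : ∀ M : ℝ, 0 ≤ M → (∫ t in (0:ℝ)..M, u t ^ 2)
      = (u' 0 ^ 2 - u' M ^ 2 + 2 * M * u M ^ 2) / 2 := by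
    intro M hM
    have h1 := st16_ftc hdF hcF' hM
    rw [intervalIntegral.integral_neg] at h1
    have h2 : (∫ t in (0:ℝ)..M, 2 * u t ^ 2) = 2 * ∫ t in (0:ℝ)..M, u t ^ 2 :=
      intervalIntegral.integral_const_mul 2 _
    rw [h2] at h1
    norm_num at h1
    linarith
  have hφ' : Tendsto (fun M : ℝ => ∫ x in (0:ℝ)..M, u x ^ 2) atTop (𝓝 (u' 0 ^ 2 / 2)) := by
    have hEq : (fun M : ℝ => (u' 0 ^ 2 - u' M ^ 2 + 2 * M * u M ^ 2) / 2)
        =ᶠ[atTop] fun M : ℝ => ∫ x in (0:ℝ)..M, u x ^ 2 := by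
      filter_upwards [eventually_ge_atTop (0:ℝ)] with M hM
      exact (hFTC M hM).symm
    have h1 : Tendsto (fun M : ℝ => u' 0 ^ 2 - u' M ^ 2 + 2 * (M * u M ^ 2)) atTop
        (𝓝 (u' 0 ^ 2)) := by
      have h2 := ((tendsto_const_nhds (x := u' 0 ^ 2) (f := atTop)).sub hu'0).add
        (hMu.const_mul 2)
      simpa using h2
    have h3 : (fun M : ℝ => u' 0 ^ 2 - u' M ^ 2 + 2 * (M * u M ^ 2))
        = fun M : ℝ => u' 0 ^ 2 - u' M ^ 2 + 2 * M * u M ^ 2 := by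
      funext M
      ring
    rw [h3] at h1
    exact (h1.div_const 2).congr' hEq
  have hfin : I = u' 0 ^ 2 / 2 := tendsto_nhds_unique hφ hφ'
  refine ⟨hIci, ?_⟩
  rw [MeasureTheory.integral_Ici_eq_integral_Ioi]
  exact hfin
end

section
/- Let u : ℝ → ℝ be twice differentiable on [0, ∞), bounded on [0, ∞), with u''(x) = 2x·u(x) for all x ≥ 0 and u(0) = 1. Then 2∫_0^∞ (u'(0)·u(h)² - u'(h)·u(h)) dh = u'(0)³ + 1. -/
open MeasureTheory Filter
private lemma monoIci {f f' : ℝ → ℝ} {a : ℝ} (hc : ContinuousOn f (Set.Ici a))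
    (hdv : ∀ x ∈ Set.Ioi a, HasDerivAt f (f' x) x)
    (hpos : ∀ x ∈ Set.Ioi a, 0 ≤ f' x) : MonotoneOn f (Set.Ici a) := by
  apply monotoneOn_of_hasDerivWithinAt_nonneg (convex_Ici a) hc (f' := f')
  · intro x hx; rw [interior_Ici] at hx ⊢; exact (hdv x hx).hasDerivWithinAt
  · intro x hx; rw [interior_Ici] at hx; exact hpos x hx

private lemma antiIci {f f' : ℝ → ℝ} {a : ℝ} (hc : ContinuousOn f (Set.Ici a))
    (hdv : ∀ x ∈ Set.Ioi a, HasDerivAt f (f' x) x)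
    (hneg : ∀ x ∈ Set.Ioi a, f' x ≤ 0) : AntitoneOn f (Set.Ici a) := by
  apply antitoneOn_of_hasDerivWithinAt_nonpos (convex_Ici a) hc (f' := f')
  · intro x hx; rw [interior_Ici] at hx ⊢; exact (hdv x hx).hasDerivWithinAt
  · intro x hx; rw [interior_Ici] at hx; exact hneg x hx

private lemma antiIcc {f f' : ℝ → ℝ} {a b : ℝ} (hc : ContinuousOn f (Set.Icc a b))
    (hdv : ∀ x ∈ Set.Ioo a b, HasDerivAt f (f' x) x)
    (hneg : ∀ x ∈ Set.Ioo a b, f' x ≤ 0) : AntitoneOn f (Set.Icc a b) := by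
  apply antitoneOn_of_hasDerivWithinAt_nonpos (convex_Icc a b) hc (f' := f')
  · intro x hx; rw [interior_Icc] at hx ⊢; exact (hdv x hx).hasDerivWithinAt
  · intro x hx; rw [interior_Icc] at hx; exact hneg x hx

private lemma expTend (c : ℝ) : Tendsto (fun x : ℝ => Real.exp (c - x)) atTop (nhds 0) := by
  apply Real.tendsto_exp_atBot.comp
  exact (tendsto_atBot_add_const_left atTop c tendsto_neg_atTop_atBot).congr (fun x => (sub_eq_add_neg c x).symm)

/-- for the bounded solution of `u'' = 2xu` on `[0,∞)` with
`u(0) = 1`, one has `2 ∫_0^∞ (u'(0) u(h)² - u'(h) u(h)) dh = u'(0)³ + 1`. -/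
theorem statement17 (u u' : ℝ → ℝ)
    (hd : ∀ x ∈ Set.Ici (0 : ℝ), HasDerivWithinAt u (u' x) (Set.Ici 0) x)
    (hd' : ∀ x ∈ Set.Ici (0 : ℝ), HasDerivWithinAt u' (2 * x * u x) (Set.Ici 0) x)
    (hb : ∃ C : ℝ, ∀ x ∈ Set.Ici (0 : ℝ), |u x| ≤ C)
    (h0 : u 0 = 1) :
    2 * ∫ h in Set.Ici (0 : ℝ), (u' 0 * u h ^ 2 - u' h * u h) = u' 0 ^ 3 + 1 := by
  obtain ⟨C, hC⟩ := hb
  have hC1 : 1 ≤ C := by have := hC 0 Set.self_mem_Ici; rw [h0] at this; simpa using this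
  have hA : ∀ x ∈ Set.Ioi (0:ℝ), HasDerivAt u (u' x) x :=
    fun x hx => (hd x (Set.mem_Ici.2 (le_of_lt hx))).hasDerivAt (Ici_mem_nhds hx)
  have hA' : ∀ x ∈ Set.Ioi (0:ℝ), HasDerivAt u' (2 * x * u x) x :=
    fun x hx => (hd' x (Set.mem_Ici.2 (le_of_lt hx))).hasDerivAt (Ici_mem_nhds hx)
  have hcu : ContinuousOn u (Set.Ici 0) := fun x hx => (hd x hx).continuousWithinAt
  have hcu' : ContinuousOn u' (Set.Ici 0) := fun x hx => (hd' x hx).continuousWithinAt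
  -- z = u u' is nondecreasing
  have hz : MonotoneOn (fun x => u x * u' x) (Set.Ici 0) := by
    apply monoIci (f' := fun x => u' x * u' x + u x * (2 * x * u x)) (hcu.mul hcu')
    · exact fun x hx => (hA x hx).mul (hA' x hx)
    · intro x hx
      have : (0:ℝ) < x := hx
      nlinarith [mul_self_nonneg (u' x), mul_self_nonneg (u x)]
  -- u u' ≤ 0
  have hzle : ∀ x ∈ Set.Ici (0:ℝ), u x * u' x ≤ 0 := by
    by_contra hcon
    push_neg at hcon
    obtain ⟨a, ha, hpos⟩ := hcon
    have hq : MonotoneOn (fun x => u x * u x - 2 * (u a * u' a) * x) (Set.Ici a) := by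
      apply monoIci (f' := fun x => (u' x * u x + u x * u' x) - 2 * (u a * u' a))
      · exact ((hcu.mono (Set.Ici_subset_Ici.2 ha)).mul (hcu.mono (Set.Ici_subset_Ici.2 ha))).sub
          (continuousOn_const.mul continuousOn_id)
      · intro x hx
        exact (((hA x (show (0:ℝ) < x from lt_of_le_of_lt ha hx)).mul (hA x (show (0:ℝ) < x from lt_of_le_of_lt ha hx))).sub
          ((hasDerivAt_const x (2 * (u a * u' a))).mul (hasDerivAt_id x))).congr_deriv (by ring)
      · intro x hx
        have hm := hz ha (show (0:ℝ) ≤ x from le_trans ha hx.le) hx.le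
        simp only at hm
        have hcm : u' x * u x = u x * u' x := mul_comm _ _
        linarith
    have hdp : 0 < (C * C + 1) / (2 * (u a * u' a)) := by positivity
    have hab : a ≤ a + (C * C + 1) / (2 * (u a * u' a)) := by linarith
    have key := hq Set.self_mem_Ici hab hab
    simp only at key
    have hfrac : 2 * (u a * u' a) * ((C * C + 1) / (2 * (u a * u' a))) = C * C + 1 := by
      field_simp; exact div_self hpos.ne'
    have hub : |u (a + (C * C + 1) / (2 * (u a * u' a)))| ≤ C :=
      hC _ (le_trans ha hab)
    have h1 : u (a + (C * C + 1) / (2 * (u a * u' a))) *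
        u (a + (C * C + 1) / (2 * (u a * u' a))) ≤ C * C := by
      nlinarith [abs_nonneg (u (a + (C * C + 1) / (2 * (u a * u' a)))),
        abs_mul_abs_self (u (a + (C * C + 1) / (2 * (u a * u' a))))]
    nlinarith [mul_self_nonneg (u a)]
  -- u^2 antitone
  have hu2 : AntitoneOn (fun x => u x * u x) (Set.Ici 0) := by
    apply antiIci (f' := fun x => u' x * u x + u x * u' x) (hcu.mul hcu)
    · exact fun x hx => (hA x hx).mul (hA x hx)
    · intro x hx; have := hzle x (Set.mem_Ici.2 (le_of_lt hx)); nlinarith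
  -- u ≥ 0
  have hupos : ∀ x ∈ Set.Ici (0:ℝ), 0 ≤ u x := by
    intro b hb
    by_contra hneg
    push_neg at hneg
    have hb0 : (0:ℝ) ≤ b := hb
    obtain ⟨c, hc, hc0⟩ : ∃ c ∈ Set.Icc (0:ℝ) b, u c = 0 := by
      have := intermediate_value_Icc' hb0 (hcu.mono (fun y hy => hy.1))
      have h0mem : (0:ℝ) ∈ Set.Icc (u b) (u 0) := by
        constructor
        · exact hneg.le
        · rw [h0]; norm_num
      obtain ⟨c, hc, hc0⟩ := this h0mem
      exact ⟨c, hc, hc0⟩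
    have := hu2 hc.1 hb hc.2
    simp only [hc0] at this
    nlinarith
  -- u' monotone
  have hu'mono : MonotoneOn u' (Set.Ici 0) := by
    apply monoIci (f' := fun x => 2 * x * u x) hcu' hA'
    intro x hx
    have : (0:ℝ) < x := hx
    have := hupos x (Set.mem_Ici.2 (le_of_lt hx))
    positivity
  -- u' ≤ 0
  have hu'le : ∀ x ∈ Set.Ici (0:ℝ), u' x ≤ 0 := by
    by_contra hcon
    push_neg at hcon
    obtain ⟨a, ha, hpos⟩ := hcon
    have hq : MonotoneOn (fun x => u x - u' a * x) (Set.Ici a) := by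
      apply monoIci (f' := fun x => u' x - u' a)
      · exact (hcu.mono (Set.Ici_subset_Ici.2 ha)).sub (continuousOn_const.mul continuousOn_id)
      · intro x hx
        exact ((hA x (show (0:ℝ) < x from lt_of_le_of_lt ha hx)).sub
          ((hasDerivAt_const x (u' a)).mul (hasDerivAt_id x))).congr_deriv (by ring)
      · intro x hx
        have := hu'mono ha (show (0:ℝ) ≤ x from le_trans ha hx.le) hx.le
        linarith
    have hdp : 0 < (2 * C + 1) / u' a := by positivity
    have hab : a ≤ a + (2 * C + 1) / u' a := by linarith
    have hq2 := hq Set.self_mem_Ici hab hab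
    simp only at hq2
    have hfrac : u' a * ((2 * C + 1) / u' a) = 2 * C + 1 := by
      field_simp
    have hub : |u (a + (2 * C + 1) / u' a)| ≤ C := hC _ (le_trans ha hab)
    have hua : |u a| ≤ C := hC a ha
    have h3 : u (a + (2 * C + 1) / u' a) ≤ C := (abs_le.1 hub).2
    have h4 : -C ≤ u a := (abs_le.1 hua).1
    nlinarith
  -- u antitone, so u ≤ 1
  have huanti : AntitoneOn u (Set.Ici 0) := antiIci hcu hA (fun x hx => hu'le x (Set.mem_Ici.2 (le_of_lt hx)))
  have hule1 : ∀ x ∈ Set.Ici (0:ℝ), u x ≤ 1 := by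
    intro x hx
    have := huanti (Set.self_mem_Ici) hx hx
    rwa [h0] at this
  -- |u'| ≤ -u' 0
  have hu'lb : ∀ x ∈ Set.Ici (0:ℝ), u' 0 ≤ u' x := fun x hx => hu'mono Set.self_mem_Ici hx hx
  -- decay: u' x + u x ≤ 0 for x ≥ 1
  have hw : ∀ x ∈ Set.Ici (1:ℝ), u' x + u x ≤ 0 := by
    have hg : MonotoneOn (fun x => (u' x + u x) * Real.exp (-x)) (Set.Ici 1) := by
      apply monoIci (f' := fun x =>
        (2 * x * u x + u' x) * Real.exp (-x) + (u' x + u x) * (Real.exp (-x) * (-1)))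
      · exact (((hcu'.mono (Set.Ici_subset_Ici.2 zero_le_one)).add
          (hcu.mono (Set.Ici_subset_Ici.2 zero_le_one))).mul
          ((Real.continuous_exp.comp continuous_neg).continuousOn))
      · intro x hx
        have hx0 : (0:ℝ) < x := lt_trans one_pos hx
        have he : HasDerivAt (fun x : ℝ => Real.exp (-x)) (Real.exp (-x) * (-1)) x :=
          ((hasDerivAt_id x).neg.congr_deriv (by norm_num)).exp
        exact ((hA' x hx0).add (hA x hx0)).mul he
      · intro x hx
        have hx1 : (1:ℝ) < x := hx
        have hu0 := hupos x (by linarith : (0:ℝ) ≤ x)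
        have heq : (2 * x * u x + u' x) * Real.exp (-x) + (u' x + u x) * (Real.exp (-x) * (-1))
            = (2*x - 1) * u x * Real.exp (-x) := by ring
        rw [heq]
        exact mul_nonneg (mul_nonneg (by linarith) hu0) (Real.exp_pos (-x)).le
    by_contra hcon
    push_neg at hcon
    obtain ⟨a, ha, hpos⟩ := hcon
    obtain ⟨δ, hδ⟩ : ∃ δ, δ = (u' a + u a) * Real.exp (-a) := ⟨_, rfl⟩
    have hδpos : 0 < δ := hδ ▸ mul_pos hpos (Real.exp_pos _)
    obtain ⟨b, hbdef⟩ : ∃ b, b = max a (Real.log (2 / δ)) := ⟨_, rfl⟩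
    have hab : a ≤ b := hbdef ▸ le_max_left _ _
    have hb1 : (1:ℝ) ≤ b := le_trans ha hab
    have hgab := hg ha (le_trans ha hab) hab
    have hexpb : 2 / δ ≤ Real.exp b := by
      calc 2 / δ ≤ Real.exp (Real.log (2/δ)) := by
            rw [Real.exp_log (by positivity)]
      _ ≤ Real.exp b := Real.exp_le_exp.2 (hbdef ▸ le_max_right _ _)
    -- u' b + u b ≥ δ * exp b ≥ 2 > 1 ≥ u' b + u b
    have h1 : δ ≤ (u' b + u b) * Real.exp (-b) := hδ ▸ hgab
    have h2 : δ * Real.exp b ≤ u' b + u b := by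
      have hEb := Real.exp_pos b
      have : Real.exp (-b) = (Real.exp b)⁻¹ := Real.exp_neg b
      rw [this] at h1
      calc δ * Real.exp b ≤ ((u' b + u b) * (Real.exp b)⁻¹) * Real.exp b := by
            exact mul_le_mul_of_nonneg_right h1 hEb.le
      _ = u' b + u b := by field_simp
    have h3 : 2 ≤ δ * Real.exp b := by
      calc (2:ℝ) = (2/δ) * δ := by field_simp
      _ ≤ Real.exp b * δ := mul_le_mul_of_nonneg_right hexpb hδpos.le
      _ = δ * Real.exp b := mul_comm _ _
    have h4 : u' b + u b ≤ 1 := by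
      have := hu'le b (by linarith : (0:ℝ) ≤ b)
      have := hule1 b (by linarith : (0:ℝ) ≤ b)
      linarith
    linarith
  -- u x ≤ exp (1 - x) for x ≥ 1
  have hdecay : ∀ x ∈ Set.Ici (1:ℝ), u x ≤ Real.exp (1 - x) := by
    have hh : AntitoneOn (fun x => u x * Real.exp x) (Set.Ici 1) := by
      apply antiIci (f' := fun x => u' x * Real.exp x + u x * Real.exp x)
      · exact (hcu.mono (Set.Ici_subset_Ici.2 zero_le_one)).mul Real.continuous_exp.continuousOn
      · intro x hx
        exact (hA x (show (0:ℝ) < x from lt_trans one_pos hx)).mul (Real.hasDerivAt_exp x)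
      · intro x hx
        have := hw x (Set.mem_Ici.2 (le_of_lt hx))
        nlinarith [Real.exp_pos x]
    intro x hx
    have := hh Set.self_mem_Ici hx hx
    have hu1 : u 1 ≤ 1 := hule1 1 (by norm_num)
    have hE1 : (0:ℝ) < Real.exp 1 := Real.exp_pos 1
    have h5 : u x * Real.exp x ≤ Real.exp 1 := by
      calc u x * Real.exp x ≤ u 1 * Real.exp 1 := this
      _ ≤ Real.exp 1 := by nlinarith
    rw [Real.exp_sub, le_div_iff₀ (Real.exp_pos x)]
    exact h5
  -- limits
  have hlimu : Tendsto u atTop (nhds 0) := by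
    apply tendsto_of_tendsto_of_tendsto_of_le_of_le' tendsto_const_nhds (expTend 1)
    · filter_upwards [eventually_ge_atTop (1:ℝ)] with x hx
      exact hupos x (by simp; linarith)
    · filter_upwards [eventually_ge_atTop (1:ℝ)] with x hx
      exact hdecay x hx
  have hu'lb2 : ∀ x ∈ Set.Ici (2:ℝ), -Real.exp (2 - x) ≤ u' x := by
    intro x hx
    have hx2 : (2:ℝ) ≤ x := hx
    have hp : AntitoneOn (fun y => u y - u' x * y) (Set.Icc (x-1) x) := by
      apply antiIcc (f' := fun y => u' y - u' x)
      · exact (hcu.mono (fun y hy => by simp only [Set.mem_Icc, Set.mem_Ici] at *; linarith [hy.1])).sub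
          (continuousOn_const.mul continuousOn_id)
      · intro y hy
        have hy0 : (0:ℝ) < y := by have := hy.1; simp only [Set.mem_Ioo] at *; linarith
        exact ((hA y hy0).sub ((hasDerivAt_const y (u' x)).mul (hasDerivAt_id y))).congr_deriv
          (by ring)
      · intro y hy
        have hy0 : (0:ℝ) ≤ y := by have := hy.1; simp only [Set.mem_Ioo] at *; linarith
        have := hu'mono hy0 (show x ∈ Set.Ici (0:ℝ) by simp only [Set.mem_Ici]; linarith) hy.2.le
        linarith
    have h5 := hp (Set.mem_Icc.2 ⟨le_rfl, by linarith⟩) (Set.mem_Icc.2 ⟨by linarith, le_rfl⟩)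
      (by linarith)
    simp only at h5
    have hr : u' x * x - u' x * (x-1) = u' x := by ring
    have h6 : u x - u (x-1) ≤ u' x := by linarith
    have h7 : u (x-1) ≤ Real.exp (1 - (x-1)) := hdecay (x-1) (by simp only [Set.mem_Ici]; linarith)
    have h8 : 0 ≤ u x := hupos x (by simp only [Set.mem_Ici]; linarith)
    have h9 : (1 : ℝ) - (x-1) = 2 - x := by ring
    rw [h9] at h7
    linarith
  have hlimu' : Tendsto u' atTop (nhds 0) := by
    apply tendsto_of_tendsto_of_tendsto_of_le_of_le'
      (show Tendsto (fun x : ℝ => -Real.exp (2 - x)) atTop (nhds 0) by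
        simpa using (expTend 2).neg) tendsto_const_nhds
    · filter_upwards [eventually_ge_atTop (2:ℝ)] with x hx
      exact hu'lb2 x hx
    · filter_upwards [eventually_ge_atTop (0:ℝ)] with x hx
      exact hu'le x hx
  have hxu2 : Tendsto (fun x => x * u x ^ 2) atTop (nhds 0) := by
    apply tendsto_of_tendsto_of_tendsto_of_le_of_le' tendsto_const_nhds (expTend 2)
    · filter_upwards [eventually_ge_atTop (0:ℝ)] with x hx
      have := hupos x hx
      positivity
    · filter_upwards [eventually_ge_atTop (1:ℝ)] with x hx
      have hx0 : (0:ℝ) ≤ x := by linarith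
      have hux := hdecay x hx
      have h8 := hupos x hx0
      have h9 : u x ^ 2 ≤ Real.exp (1-x) * Real.exp (1-x) := by nlinarith
      have hid : Real.exp (1-x) * Real.exp (1-x) = Real.exp (-x) * Real.exp (2-x) := by
        rw [← Real.exp_add, ← Real.exp_add]; ring_nf
      have hxe : x * Real.exp (-x) ≤ 1 := by
        have h1 : Real.exp (-x) * Real.exp x = 1 := by rw [← Real.exp_add]; simp
        nlinarith [Real.add_one_le_exp x, Real.exp_pos (-x)]
      nlinarith [mul_le_mul_of_nonneg_left h9 hx0, Real.exp_pos (2-x),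
        mul_le_mul_of_nonneg_right hxe (Real.exp_pos (2-x)).le]
  -- antiderivative G
  have hGd : ∀ x ∈ Set.Ioi (0:ℝ),
      HasDerivAt (fun y => u' 0 * (u' 0^2 - u' y^2 + 2*(y * u y^2))/2 - u y^2/2)
        (u' 0 * u x ^ 2 - u' x * u x) x := by
    intro x hx
    have hu := hA x hx
    have hu' := hA' x hx
    have d2 : HasDerivAt (fun y => y * u y^2)
        (1 * u x^2 + x * ((2:ℝ) * u x ^ (2-1) * u' x)) x := (show HasDerivAt (fun y : ℝ => y) 1 x from hasDerivAt_id x).mul (hu.pow 2)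
    have dall := ((((hasDerivAt_const x (u' 0^2)).sub (hu'.pow 2)).add
      (d2.const_mul 2)).const_mul (u' 0)).div_const 2
    have := dall.sub ((hu.pow 2).div_const 2)
    exact this.congr_deriv (by push_cast; ring)
  have hGc0 : ContinuousWithinAt (fun y => u' 0 * (u' 0^2 - u' y^2 + 2*(y * u y^2))/2 - u y^2/2)
      (Set.Ici 0) 0 := by
    have cw : ContinuousWithinAt u (Set.Ici 0) 0 := hcu 0 Set.self_mem_Ici
    have cw' : ContinuousWithinAt u' (Set.Ici 0) 0 := hcu' 0 Set.self_mem_Ici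
    exact ((((continuousWithinAt_const.sub (cw'.pow 2)).add
      ((continuousWithinAt_id.mul (cw.pow 2)).const_mul 2)).const_mul (u' 0)).div_const 2).sub
      ((cw.pow 2).div_const 2)
  have hGlim : Tendsto (fun y => u' 0 * (u' 0^2 - u' y^2 + 2*(y * u y^2))/2 - u y^2/2)
      atTop (nhds (u' 0 ^ 3 / 2)) := by
    have t1 := ((((tendsto_const_nhds (x := u' 0^2)).sub (hlimu'.pow 2)).add
      (hxu2.const_mul 2)).const_mul (u' 0)).div_const 2 |>.sub ((hlimu.pow 2).div_const 2)
    have : u' 0 * (u' 0^2 - (0:ℝ)^2 + 2*0)/2 - (0:ℝ)^2/2 = u' 0 ^3/2 := by ring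
    rw [this] at t1
    exact t1
  -- integrability
  have hfint : IntegrableOn (fun h => u' 0 * u h^2 - u' h * u h) (Set.Ioi (0:ℝ)) volume := by
    have hcf : ContinuousOn (fun h => u' 0 * u h^2 - u' h * u h) (Set.Ici 0) :=
      (continuousOn_const.mul (hcu.pow 2)).sub (hcu'.mul hcu)
    apply Integrable.mono' (g := fun x => (2 * (-(u' 0)) * Real.exp 1) * Real.exp (-(1:ℝ) * x))
    · exact (exp_neg_integrableOn_Ioi 0 one_pos).const_mul _
    · exact (hcf.mono (Set.Ioi_subset_Ici le_rfl)).aestronglyMeasurable measurableSet_Ioi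
    · rw [ae_restrict_iff' measurableSet_Ioi]
      apply ae_of_all
      intro x hx
      have hx0 : (0:ℝ) ≤ x := le_of_lt hx
      have h1 : u x ≤ Real.exp (1-x) := by
        rcases le_or_gt 1 x with h|h
        · exact hdecay x h
        · calc u x ≤ 1 := hule1 x hx0
            _ ≤ Real.exp (1-x) := Real.one_le_exp (by linarith)
      have hpx := hupos x hx0
      have h1' : u x ≤ 1 := hule1 x hx0
      have k0 : 0 ≤ -(u' 0) := by linarith [hu'le 0 Set.self_mem_Ici]
      have h2 : |u' x| ≤ -(u' 0) := by
        rw [abs_of_nonpos (hu'le x hx0)]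
        linarith [hu'lb x hx0]
      have e1 : |u' 0 * u x ^2 - u' x * u x| ≤ |u' 0| * (u x * u x) + |u' x| * u x := by
        calc |u' 0 * u x ^2 - u' x * u x| ≤ |u' 0 * u x^2| + |u' x * u x| := abs_sub _ _
          _ = |u' 0| * (u x * u x) + |u' x| * u x := by
              rw [abs_mul, abs_mul, abs_of_nonneg hpx, abs_of_nonneg (by positivity : (0:ℝ) ≤ u x ^2)]
              ring
      have e2 : |u' 0| = -(u' 0) := abs_of_nonpos (hu'le 0 Set.self_mem_Ici)
      have e3 : Real.exp 1 * Real.exp (-(1:ℝ) * x) = Real.exp (1 - x) := by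
        rw [← Real.exp_add]; ring_nf
      rw [e2] at e1
      have e4 : u x * u x ≤ u x := by nlinarith
      calc |u' 0 * u x ^2 - u' x * u x| ≤ (-(u' 0)) * u x + (-(u' 0)) * u x := by nlinarith [abs_nonneg (u' x)]
        _ = 2 * (-(u' 0)) * u x := by ring
        _ ≤ 2 * (-(u' 0)) * Real.exp (1-x) := by nlinarith
        _ = 2 * (-(u' 0)) * Real.exp 1 * Real.exp (-(1:ℝ)*x) := by rw [← e3]; ring
  -- FTC
  have hkey := integral_Ioi_of_hasDerivAt_of_tendsto (a := 0) hGc0 hGd hfint hGlim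
  have hG0 : u' 0 * (u' 0^2 - u' 0^2 + 2*((0:ℝ) * u 0^2))/2 - u 0^2/2 = -(1/2) := by
    rw [h0]; ring
  rw [MeasureTheory.integral_Ici_eq_integral_Ioi, hkey, hG0]
  ring
end
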